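/- arXiv:cs/0605139 — 3 statements merged into one kernel-verified Lean document; each statement's English description precedes it below -/
import Mathlib

section
/- Let n = 2t+1 be an odd positive integer, let G_n be the Boolean function of n variables defined by G_n(X) = 1 if wt(X) ≤ t and G_n(X) = 0 otherwise, enumerate 1_{G_n} = {Y_1,…,Y_{2^{n−1}}} and 0_{G_n} = {Z_1,…,Z_{2^{n−1}}}, and set W = V(0_{G_n})·V(1_{G_n})^{−1}. Then the number of Boolean functions f of n variables with AI(f) = t+1 equals the number of tuples (k; i_1 < … < i_k; j_1 < … < j_k) with 0 ≤ k ≤ 2^{n−1} and indices in {1,…,2^{n−1}} such that the k × k submatrix of W with rows i_1,…,i_k and columns j_1,…,j_k is invertible over F_2 (the empty 0×0 matrix being invertible by convention). -/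
/-- Hamming weight of a point of `F_2^n`. -/
def wtB {n : ℕ} (X : Fin n → ZMod 2) : ℕ :=
  (Finset.univ.filter (fun i => X i = 1)).card

/-- Coefficient of the monomial `∏_{i ∈ S} x_i` in the algebraic normal form of `f`. -/
def anfCoeff {n : ℕ} (f : (Fin n → ZMod 2) → ZMod 2) (S : Finset (Fin n)) : ZMod 2 :=
  ∑ x ∈ Finset.univ.filter (fun x : Fin n → ZMod 2 => ∀ i, x i = 1 → i ∈ S), f x

/-- Algebraic degree of a Boolean function (degree of its ANF). -/
def degB {n : ℕ} (f : (Fin n → ZMod 2) → ZMod 2) : ℕ :=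
  (Finset.univ.filter (fun S : Finset (Fin n) => anfCoeff f S ≠ 0)).sup Finset.card

/-- `g` is an annihilator of `f` : `g` is nonzero and `f · g = 0`. -/
def IsAnnihilator {n : ℕ} (f g : (Fin n → ZMod 2) → ZMod 2) : Prop :=
  g ≠ 0 ∧ ∀ x, f x * g x = 0

/-- Algebraic immunity: minimal degree of an annihilator of `f` or of `f ⊕ 1`. -/
noncomputable def AI {n : ℕ} (f : (Fin n → ZMod 2) → ZMod 2) : ℕ :=
  sInf {d | ∃ g, (IsAnnihilator f g ∨ IsAnnihilator (fun x => f x + 1) g) ∧ degB g = d}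

/-- Matrix whose rows (indexed by the set `T`) are the evaluation vectors `v(X)`, `X ∈ T`,
of all monomials of degree at most `D`. -/
def VSet {n : ℕ} (D : ℕ) (T : Set (Fin n → ZMod 2)) :
    Matrix T {S : Finset (Fin n) // S.card ≤ D} (ZMod 2) :=
  fun x S => ∏ i ∈ S.1, (x : Fin n → ZMod 2) i

/-- Matrix whose rows (listed according to the enumeration `Y`) are the evaluation vectors
`v(Y r)` of all monomials of degree at most `D`. -/
def VEnum {n : ℕ} (D : ℕ) {N : ℕ} (Y : Fin N → (Fin n → ZMod 2)) :
    Matrix (Fin N) {S : Finset (Fin n) // S.card ≤ D} (ZMod 2) :=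
  fun r S => ∏ i ∈ S.1, Y r i

namespace S9

abbrev Pt (n : ℕ) := Fin n → ZMod 2

def ind {n : ℕ} (S : Finset (Fin n)) : Pt n := fun i => if i ∈ S then 1 else 0

def supp {n : ℕ} (x : Pt n) : Finset (Fin n) := Finset.univ.filter (fun i => x i = 1)

def mono {n : ℕ} (S : Finset (Fin n)) (x : Pt n) : ZMod 2 := ∏ i ∈ S, x i

lemma z2cases : ∀ a : ZMod 2, a = 0 ∨ a = 1 := by decide

lemma z2add : ∀ a b : ZMod 2, a + b = 0 ↔ a = b := by decide

@[simp] lemma mem_supp {n : ℕ} {x : Pt n} {i : Fin n} : i ∈ supp x ↔ x i = 1 := by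
  simp [supp]

@[simp] lemma supp_ind {n : ℕ} (S : Finset (Fin n)) : supp (ind S) = S := by
  ext i; simp only [mem_supp, ind]; split <;> simp_all

@[simp] lemma ind_supp {n : ℕ} (x : Pt n) : ind (supp x) = x := by
  funext i
  rcases z2cases (x i) with h | h <;> simp [ind, h]

lemma mono_eq {n : ℕ} (S : Finset (Fin n)) (x : Pt n) :
    mono S x = if S ⊆ supp x then 1 else 0 := by
  split
  · next h => exact Finset.prod_eq_one (fun i hi => by simpa using h hi)
  · next h =>
    obtain ⟨i, hi, hni⟩ := Finset.not_subset.mp h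
    refine Finset.prod_eq_zero hi ?_
    rcases z2cases (x i) with h0 | h1
    · exact h0
    · exact absurd (mem_supp.mpr h1) hni

lemma wtB_eq {n : ℕ} (x : Pt n) : wtB x = (supp x).card := rfl

@[simp] lemma wtB_ind {n : ℕ} (S : Finset (Fin n)) : wtB (ind S) = S.card := by
  rw [wtB_eq, supp_ind]

lemma filter_sandwich {n : ℕ} (A B : Finset (Fin n)) :
    Finset.univ.filter (fun S => A ⊆ S ∧ S ⊆ B) = Finset.Icc A B := by
  ext S; simp [Finset.mem_Icc]

lemma two_pow_z2 (m : ℕ) (hm : m ≠ 0) : ((2 ^ m : ℕ) : ZMod 2) = 0 := by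
  push_cast
  rw [show ((2:ZMod 2) = 0) from rfl]
  exact zero_pow hm

lemma zcount {n : ℕ} (A B : Finset (Fin n)) :
    (((Finset.univ.filter (fun S => A ⊆ S ∧ S ⊆ B)).card : ℕ) : ZMod 2)
      = if A = B then 1 else 0 := by
  rw [filter_sandwich]
  by_cases hAB : A ⊆ B
  · rw [Finset.card_Icc_finset hAB]
    by_cases h : A = B
    · subst h; simp
    · have hlt : A.card < B.card := Finset.card_lt_card (ssubset_of_ne_of_subset h hAB)
      rw [if_neg h, two_pow_z2 _ (by omega)]
  · have h1 : Finset.Icc A B = ∅ := by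
      apply Finset.Icc_eq_empty
      simpa using hAB
    have h2 : A ≠ B := by rintro rfl; exact hAB le_rfl
    rw [h1]
    simp [h2]



-- evaluation of a coefficient combination at an indicator point
lemma eval_sum_ind {n : ℕ} (c : Finset (Fin n) → ZMod 2) (S : Finset (Fin n)) :
    (∑ T : Finset (Fin n), c T * mono T (ind S)) = ∑ T ∈ S.powerset, c T := by
  have h1 : ∀ T : Finset (Fin n), c T * mono T (ind S) = if T ⊆ S then c T else 0 := by
    intro T
    rw [mono_eq, supp_ind]
    split <;> simp
  calc (∑ T : Finset (Fin n), c T * mono T (ind S))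
      = ∑ T : Finset (Fin n), if T ⊆ S then c T else 0 := by
        exact Finset.sum_congr rfl (fun T _ => h1 T)
    _ = ∑ T ∈ Finset.univ.filter (· ⊆ S), c T := (Finset.sum_filter _ _).symm
    _ = ∑ T ∈ S.powerset, c T := by
        apply Finset.sum_congr _ (fun _ _ => rfl)
        ext T; simp

-- monomials are linearly independent (restricted to low degree and low-weight points)
lemma coeff_zero {n : ℕ} (D : ℕ) (c : Finset (Fin n) → ZMod 2)
    (hsupp : ∀ S, c S ≠ 0 → S.card ≤ D)
    (hvan : ∀ S : Finset (Fin n), S.card ≤ D →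
      (∑ T : Finset (Fin n), c T * mono T (ind S)) = 0) :
    c = 0 := by
  have key : ∀ S : Finset (Fin n), c S = 0 := by
    intro S
    induction S using Finset.strongInduction with
    | _ S ih =>
      by_cases hS : S.card ≤ D
      · have h := hvan S hS
        rw [eval_sum_ind] at h
        rwa [Finset.sum_eq_single_of_mem S (Finset.mem_powerset_self S)
          (fun T hT hne => ih T (Finset.ssubset_iff_subset_ne.mpr
            ⟨Finset.mem_powerset.mp hT, hne⟩))] at h
      · by_contra h
        exact hS (hsupp S h)
  funext S; exact key S

lemma anfCoeff_eq {n : ℕ} (f : Pt n → ZMod 2) (S : Finset (Fin n)) :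
    anfCoeff f S = ∑ x ∈ Finset.univ.filter (fun x : Pt n => supp x ⊆ S), f x := by
  unfold anfCoeff
  apply Finset.sum_congr _ (fun _ _ => rfl)
  apply Finset.filter_congr
  intro x _
  constructor
  · intro h i hi
    exact h i (mem_supp.mp hi)
  · intro h i hxi
    exact h (mem_supp.mpr hxi)

-- ANF expansion
lemma anf_expansion {n : ℕ} (f : Pt n → ZMod 2) (x : Pt n) :
    f x = ∑ S : Finset (Fin n), anfCoeff f S * mono S x := by
  symm
  have step : ∀ S : Finset (Fin n), anfCoeff f S * mono S x
      = ∑ y : Pt n, (if supp y ⊆ S ∧ S ⊆ supp x then f y else 0) := by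
    intro S
    rw [anfCoeff_eq, mono_eq]
    rw [Finset.sum_filter]
    rw [Finset.sum_mul]
    apply Finset.sum_congr rfl
    intro y _
    split <;> split <;> simp_all
  calc (∑ S : Finset (Fin n), anfCoeff f S * mono S x)
      = ∑ S : Finset (Fin n), ∑ y : Pt n, (if supp y ⊆ S ∧ S ⊆ supp x then f y else 0) :=
        Finset.sum_congr rfl (fun S _ => step S)
    _ = ∑ y : Pt n, ∑ S : Finset (Fin n), (if supp y ⊆ S ∧ S ⊆ supp x then f y else 0) :=
        Finset.sum_comm
    _ = ∑ y : Pt n, f y * (((Finset.univ.filter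
          (fun S : Finset (Fin n) => supp y ⊆ S ∧ S ⊆ supp x)).card : ℕ) : ZMod 2) := by
        apply Finset.sum_congr rfl
        intro y _
        rw [← Finset.sum_filter, Finset.sum_const, nsmul_eq_mul, mul_comm]
    _ = ∑ y : Pt n, f y * (if supp y = supp x then 1 else 0) := by
        apply Finset.sum_congr rfl
        intro y _
        rw [zcount]
    _ = ∑ y : Pt n, f y * (if y = x then 1 else 0) := by
        apply Finset.sum_congr rfl
        intro y _
        congr 1
        have : supp y = supp x ↔ y = x := by
          constructor
          · intro h
            have := congrArg ind h
            simpa using this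
          · intro h; rw [h]
        simp [this]
    _ = f x := by simp
  
lemma degB_le_iff {n : ℕ} (f : Pt n → ZMod 2) (D : ℕ) :
    degB f ≤ D ↔ ∀ S, anfCoeff f S ≠ 0 → S.card ≤ D := by
  unfold degB
  rw [Finset.sup_le_iff]
  simp

-- sum over all points of a monomial
lemma sum_mono_all {n : ℕ} (C : Finset (Fin n)) (hC : C.card < n) :
    (∑ y : Pt n, mono C y) = 0 := by
  have h1 : (∑ y : Pt n, mono C y)
      = (((Finset.univ.filter (fun y : Pt n => C ⊆ supp y)).card : ℕ) : ZMod 2) := by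
    rw [Finset.card_filter]
    push_cast
    apply Finset.sum_congr rfl
    intro y _
    rw [mono_eq]
  rw [h1]
  have h2 : (Finset.univ.filter (fun y : Pt n => C ⊆ supp y)).card
      = (Finset.univ.filter (fun S : Finset (Fin n) => C ⊆ S ∧ S ⊆ Finset.univ)).card := by
    apply Finset.card_nbij' (i := fun y => supp y) (j := fun S => ind S)
    · intro y hy
      simp only [Finset.mem_coe, Finset.mem_filter, Finset.mem_univ, true_and] at *
      exact ⟨hy, Finset.subset_univ _⟩
    · intro S hS
      simp only [Finset.mem_coe, Finset.mem_filter, Finset.mem_univ, true_and] at *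
      rw [supp_ind]; exact hS.1
    · intro y _; simp
    · intro S _; simp
  rw [h2, filter_sandwich, Finset.card_Icc_finset (Finset.subset_univ C)]
  rw [Finset.card_univ, Fintype.card_fin]
  exact two_pow_z2 _ (by omega)


abbrev Mn (n t : ℕ) := {S : Finset (Fin n) // S.card ≤ t}

def EF {n : ℕ} (D : ℕ) (c : Mn n D → ZMod 2) : Pt n → ZMod 2 :=
  fun x => ∑ S : Mn n D, c S * mono S.1 x

def extc {n : ℕ} (D : ℕ) (c : Mn n D → ZMod 2) : Finset (Fin n) → ZMod 2 :=
  fun T => if h : T.card ≤ D then c ⟨T, h⟩ else 0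

lemma EF_eq {n D : ℕ} (c : Mn n D → ZMod 2) (x : Pt n) :
    EF D c x = ∑ T : Finset (Fin n), extc D c T * mono T x := by
  unfold EF
  have h0 : ∀ S : Mn n D, c S * mono S.1 x = extc D c S.1 * mono S.1 x := by
    intro S
    congr 1
    simp [extc, S.2]
  calc ∑ S : Mn n D, c S * mono S.1 x
      = ∑ S : Mn n D, extc D c S.1 * mono S.1 x := Finset.sum_congr rfl (fun S _ => h0 S)
    _ = ∑ T ∈ Finset.univ.filter (fun T : Finset (Fin n) => T.card ≤ D),
          extc D c T * mono T x :=
        (Finset.sum_subtype _ (by intro T; simp) (fun T => extc D c T * mono T x)).symm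
    _ = ∑ T : Finset (Fin n), extc D c T * mono T x :=
        Finset.sum_filter_of_ne (fun T _ h => by
          by_contra hT
          exact h (by simp [extc, hT]))

lemma EF_ne_zero {n D : ℕ} (c : Mn n D → ZMod 2) (h : EF D c = 0) : c = 0 := by
  have h2 : extc D c = 0 := by
    apply coeff_zero n
    · intro S _; exact Finset.card_le_univ S |>.trans (by simp)
    · intro S _
      rw [← EF_eq]
      rw [h]; rfl
  funext S
  have := congrFun h2 S.1
  simpa [extc, S.2] using this

lemma EF_add {n D : ℕ} (c d : Mn n D → ZMod 2) (x : Pt n) :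
    EF D (c + d) x = EF D c x + EF D d x := by
  unfold EF
  rw [← Finset.sum_add_distrib]
  apply Finset.sum_congr rfl
  intro S _
  simp [add_mul]

lemma anfCoeff_EF {n D : ℕ} (c : Mn n D → ZMod 2) (S : Finset (Fin n)) :
    anfCoeff (EF D c) S = extc D c S := by
  rw [anfCoeff_eq]
  have key : ∀ T : Finset (Fin n),
      (∑ x ∈ Finset.univ.filter (fun x : Pt n => supp x ⊆ S), mono T x)
        = if T = S then 1 else 0 := by
    intro T
    have h1 : (∑ x ∈ Finset.univ.filter (fun x : Pt n => supp x ⊆ S), mono T x)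
        = (((Finset.univ.filter (fun x : Pt n => T ⊆ supp x ∧ supp x ⊆ S)).card : ℕ) : ZMod 2) := by
      rw [Finset.sum_filter, Finset.card_filter]
      push_cast
      apply Finset.sum_congr rfl
      intro y _
      rw [mono_eq]
      split <;> split <;> simp_all
    rw [h1]
    have h2 : (Finset.univ.filter (fun x : Pt n => T ⊆ supp x ∧ supp x ⊆ S)).card
        = (Finset.univ.filter (fun U : Finset (Fin n) => T ⊆ U ∧ U ⊆ S)).card := by
      apply Finset.card_nbij' (i := fun y => supp y) (j := fun U => ind U)
      · intro y hy; simp only [Finset.mem_coe, Finset.mem_filter, Finset.mem_univ, true_and] at *; exact hy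
      · intro U hU; simp only [Finset.mem_coe, Finset.mem_filter, Finset.mem_univ, true_and] at *
        rw [supp_ind]; exact hU
      · intro y _; simp
      · intro U _; simp
    rw [h2, zcount]
  calc (∑ x ∈ Finset.univ.filter (fun x : Pt n => supp x ⊆ S), EF D c x)
      = ∑ x ∈ Finset.univ.filter (fun x : Pt n => supp x ⊆ S),
          ∑ T : Finset (Fin n), extc D c T * mono T x := by
        apply Finset.sum_congr rfl; intro x _; exact EF_eq c x
    _ = ∑ T : Finset (Fin n), ∑ x ∈ Finset.univ.filter (fun x : Pt n => supp x ⊆ S),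
          extc D c T * mono T x := Finset.sum_comm
    _ = ∑ T : Finset (Fin n), extc D c T * (if T = S then 1 else 0) := by
        apply Finset.sum_congr rfl
        intro T _
        rw [← Finset.mul_sum, key T]
    _ = extc D c S := by simp
  
lemma degB_EF {n D : ℕ} (c : Mn n D → ZMod 2) : degB (EF D c) ≤ D := by
  rw [degB_le_iff]
  intro S h
  rw [anfCoeff_EF] at h
  by_contra hc
  exact h (by simp [extc, hc])

lemma anf_as_EF {n D : ℕ} (g : Pt n → ZMod 2) (hg : degB g ≤ D) :
    g = EF D (fun S => anfCoeff g S.1) := by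
  funext x
  rw [EF_eq, anf_expansion g x]
  apply Finset.sum_congr rfl
  intro T _
  congr 1
  unfold extc
  split
  · rfl
  · next h =>
    by_contra hc
    exact h ((degB_le_iff g D).mp hg T hc)

lemma ann_iff {n : ℕ} (f g : Pt n → ZMod 2) :
    (∀ x, f x * g x = 0) ↔ ∀ x, f x = 1 → g x = 0 := by
  constructor
  · intro h x hx
    have := h x
    rwa [hx, one_mul] at this
  · intro h x
    rcases z2cases (f x) with h0 | h1
    · rw [h0, zero_mul]
    · rw [h1, one_mul]; exact h x h1

def NoA {n : ℕ} (t : ℕ) (f : Pt n → ZMod 2) : Prop :=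
  ∀ c : Mn n t → ZMod 2, (∀ x, f x = 1 → EF t c x = 0) → c = 0

lemma exists_ann_lowdeg_iff {n t : ℕ} (f : Pt n → ZMod 2) :
    (∃ g, IsAnnihilator f g ∧ degB g ≤ t) ↔ ¬ NoA t f := by
  constructor
  · rintro ⟨g, ⟨hg0, hann⟩, hdeg⟩ hNoA
    have hgEF := anf_as_EF g hdeg
    have : (fun S : Mn n t => anfCoeff g S.1) = 0 := by
      apply hNoA
      intro x hx
      rw [← hgEF]
      exact (ann_iff f g).mp hann x hx
    apply hg0
    rw [hgEF, this]
    funext x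
    simp [EF]
  · intro hNoA
    rw [NoA] at hNoA
    push_neg at hNoA
    obtain ⟨c, hvan, hc0⟩ := hNoA
    refine ⟨EF t c, ⟨?_, ?_⟩, degB_EF c⟩
    · intro h
      exact hc0 (EF_ne_zero c h)
    · rw [ann_iff]
      exact hvan


lemma card_Mn {n t : ℕ} (hn : n = 2 * t + 1) : Fintype.card (Mn n t) = 2 ^ (n - 1) := by
  rw [Fintype.card_subtype]
  set A := Finset.univ.filter (fun S : Finset (Fin n) => S.card ≤ t) with hA
  set B := Finset.univ.filter (fun S : Finset (Fin n) => ¬ S.card ≤ t) with hB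
  have hcompl : ∀ S : Finset (Fin n), Sᶜ.card = n - S.card := by
    intro S
    rw [Finset.card_compl, Fintype.card_fin]
  have hcle : ∀ S : Finset (Fin n), S.card ≤ n := fun S => by
    simpa using Finset.card_le_univ S
  have hAB : A.card = B.card := by
    apply Finset.card_nbij' (i := fun S => Sᶜ) (j := fun S => Sᶜ)
    · intro S hS
      rw [hA, Finset.mem_coe, Finset.mem_filter] at hS
      simp only [hB, Finset.mem_coe, Finset.mem_filter]
      refine ⟨Finset.mem_univ _, ?_⟩
      rw [hcompl]
      have := hS.2
      omega
    · intro S hS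
      rw [hB, Finset.mem_coe, Finset.mem_filter] at hS
      simp only [hA, Finset.mem_coe, Finset.mem_filter]
      refine ⟨Finset.mem_univ _, ?_⟩
      rw [hcompl]
      have h1 := hS.2
      have h2 := hcle S
      omega
    · intro S _; simp
    · intro S _; simp
  have hsum : A.card + B.card = 2 ^ n := by
    rw [hA, hB]
    rw [Finset.card_filter_add_card_filter_not]
    rw [Finset.card_univ, Fintype.card_finset, Fintype.card_fin]
  have h2 : 2 ^ n = 2 * 2 ^ (n - 1) := by
    rw [← pow_succ']
    congr 1
    omega
  omega

lemma card_coeffs {n t : ℕ} (hn : n = 2 * t + 1) :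
    Fintype.card (Mn n t → ZMod 2) = 2 ^ (2 ^ (n - 1)) := by
  rw [Fintype.card_fun, card_Mn hn]
  rfl

-- A1 : there is always an annihilator of degree ≤ t+1
lemma exists_ann_le_succ {n t : ℕ} (hn : n = 2 * t + 1) (f : Pt n → ZMod 2) :
    ∃ g, (IsAnnihilator f g ∨ IsAnnihilator (fun x => f x + 1) g) ∧ degB g ≤ t + 1 := by
  classical
  have hcard1 : Fintype.card (Pt n) = 2 ^ n := by
    rw [Fintype.card_fun, Fintype.card_fin]
    rfl
  set S1 := Finset.univ.filter (fun x : Pt n => f x = 1) with hS1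
  set S0 := Finset.univ.filter (fun x : Pt n => ¬ f x = 1) with hS0
  have hsum : S1.card + S0.card = 2 ^ n := by
    rw [hS1, hS0, Finset.card_filter_add_card_filter_not, Finset.card_univ, hcard1]
  -- the space of potential coefficient vectors is strictly bigger than 2^(n-1)
  have hbig : 2 ^ (n - 1) < Fintype.card (Mn n (t + 1)) := by
    rw [Fintype.card_subtype]
    have hmono : (Finset.univ.filter (fun S : Finset (Fin n) => S.card ≤ t))
        ⊂ Finset.univ.filter (fun S : Finset (Fin n) => S.card ≤ t + 1) := by
      rw [Finset.ssubset_iff_of_subset]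
      · obtain ⟨T, _, hT⟩ := Finset.exists_subset_card_eq
          (show t + 1 ≤ (Finset.univ : Finset (Fin n)).card by
            rw [Finset.card_univ, Fintype.card_fin]; omega)
        exact ⟨T, by simp [hT], by simp [hT]⟩
      · intro S hS
        rw [Finset.mem_filter] at *
        exact ⟨hS.1, by omega⟩
    have := Finset.card_lt_card hmono
    have hc : (Finset.univ.filter (fun S : Finset (Fin n) => S.card ≤ t)).card = 2 ^ (n - 1) := by
      have := card_Mn hn
      rwa [Fintype.card_subtype] at this
    omega
  -- helper: given a set of points of size ≤ 2^(n-1), find a nonzero low-degree function vanishing on it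
  have key : ∀ Sm : Finset (Pt n), Sm.card ≤ 2 ^ (n - 1) →
      ∃ c : Mn n (t+1) → ZMod 2, c ≠ 0 ∧ ∀ x ∈ Sm, EF (t+1) c x = 0 := by
    intro Sm hSm
    have hlt : Fintype.card (↥Sm → ZMod 2) < Fintype.card (Mn n (t+1) → ZMod 2) := by
      rw [Fintype.card_fun, Fintype.card_fun, Fintype.card_coe]
      exact Nat.pow_lt_pow_right (by norm_num) (by omega)
    obtain ⟨c1, c2, hne, heq⟩ := Fintype.exists_ne_map_eq_of_card_lt
      (fun (c : Mn n (t+1) → ZMod 2) => (fun x : ↥Sm => EF (t+1) c x.1)) hlt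
    refine ⟨c1 + c2, ?_, ?_⟩
    · intro h
      apply hne
      funext S
      have := congrFun h S
      simp only [Pi.add_apply, Pi.zero_apply] at this
      exact (z2add _ _).mp this
    · intro x hx
      rw [EF_add]
      have := congrFun heq ⟨x, hx⟩
      simp only at this
      rw [this]
      exact (z2add _ _).mpr rfl
  rcases le_or_gt S1.card (2 ^ (n-1)) with hle | hgt
  · obtain ⟨c, hc0, hvan⟩ := key S1 hle
    refine ⟨EF (t+1) c, Or.inl ⟨fun h => hc0 (EF_ne_zero c h), ?_⟩, degB_EF c⟩
    rw [ann_iff]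
    intro x hx
    exact hvan x (by rw [hS1]; simp [hx])
  · have hle0 : S0.card ≤ 2 ^ (n-1) := by
      have h2 : 2 ^ n = 2 * 2 ^ (n - 1) := by
        rw [← pow_succ']
        congr 1
        omega
      omega
    obtain ⟨c, hc0, hvan⟩ := key S0 hle0
    refine ⟨EF (t+1) c, Or.inr ⟨fun h => hc0 (EF_ne_zero c h), ?_⟩, degB_EF c⟩
    rw [ann_iff]
    intro x hx
    have hfx : f x = 0 := by
      rcases z2cases (f x) with h | h
      · exact h
      · rw [h] at hx; exact absurd hx (by decide)
    apply hvan x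
    rw [hS0]
    simp [hfx]


lemma AI_eq_iff {n t : ℕ} (hn : n = 2 * t + 1) (f : Pt n → ZMod 2) :
    AI f = t + 1 ↔ (NoA t f ∧ NoA t (fun x => f x + 1)) := by
  set T := {d | ∃ g, (IsAnnihilator f g ∨ IsAnnihilator (fun x => f x + 1) g) ∧ degB g = d}
    with hT
  obtain ⟨g0, hg0, hdeg0⟩ := exists_ann_le_succ hn f
  have hmem0 : degB g0 ∈ T := ⟨g0, hg0, rfl⟩
  constructor
  · intro hAI
    constructor
    · intro c hvan
      by_contra hc0
      have : ∃ g, IsAnnihilator f g ∧ degB g ≤ t :=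
        (exists_ann_lowdeg_iff f).mpr (by rw [NoA]; push_neg; exact ⟨c, hvan, hc0⟩)
      obtain ⟨g, hg, hdeg⟩ := this
      have : AI f ≤ degB g := Nat.sInf_le ⟨g, Or.inl hg, rfl⟩
      omega
    · intro c hvan
      by_contra hc0
      have : ∃ g, IsAnnihilator (fun x => f x + 1) g ∧ degB g ≤ t :=
        (exists_ann_lowdeg_iff _).mpr (by rw [NoA]; push_neg; exact ⟨c, hvan, hc0⟩)
      obtain ⟨g, hg, hdeg⟩ := this
      have : AI f ≤ degB g := Nat.sInf_le ⟨g, Or.inr hg, rfl⟩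
      omega
  · rintro ⟨h1, h2⟩
    have hlb : ∀ d ∈ T, t + 1 ≤ d := by
      rintro d ⟨g, hg, rfl⟩
      by_contra hlt
      have hdle : degB g ≤ t := by omega
      rcases hg with hg | hg
      · exact ((exists_ann_lowdeg_iff f).mp ⟨g, hg, hdle⟩) h1
      · exact ((exists_ann_lowdeg_iff _).mp ⟨g, hg, hdle⟩) h2
    have hd0 : degB g0 = t + 1 := le_antisymm hdeg0 (hlb _ hmem0)
    apply le_antisymm
    · rw [← hd0]
      exact Nat.sInf_le hmem0
    · exact le_csInf ⟨degB g0, hmem0⟩ hlb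

-- self-duality transfer: if no codeword vanishes on S, no codeword is supported inside S
lemma selfdual_transfer {n t : ℕ} (hn : n = 2 * t + 1) (S : Finset (Pt n))
    (hcard : S.card = 2 ^ (n - 1))
    (hinj : ∀ c : Mn n t → ZMod 2, (∀ x ∈ S, EF t c x = 0) → c = 0) :
    ∀ c : Mn n t → ZMod 2, (∀ x ∉ S, EF t c x = 0) → c = 0 := by
  classical
  -- orthogonality of any two codewords
  have orth : ∀ c d : Mn n t → ZMod 2, (∑ y : Pt n, EF t d y * EF t c y) = 0 := by
    intro c d
    have expand : ∀ y : Pt n, EF t d y * EF t c y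
        = ∑ A : Mn n t, ∑ B : Mn n t, d A * c B * mono (A.1 ∪ B.1) y := by
      intro y
      rw [EF, EF, Finset.sum_mul_sum]
      apply Finset.sum_congr rfl
      intro A _
      apply Finset.sum_congr rfl
      intro B _
      have : mono A.1 y * mono B.1 y = mono (A.1 ∪ B.1) y := by
        simp only [mono_eq]
        by_cases hA : (A.1 : Finset (Fin n)) ⊆ supp y <;>
          by_cases hB : (B.1 : Finset (Fin n)) ⊆ supp y <;>
          simp [hA, hB, Finset.union_subset_iff]
      calc d A * mono A.1 y * (c B * mono B.1 y)
          = d A * c B * (mono A.1 y * mono B.1 y) := by ring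
        _ = d A * c B * mono (A.1 ∪ B.1) y := by rw [this]
    calc (∑ y : Pt n, EF t d y * EF t c y)
        = ∑ y : Pt n, ∑ A : Mn n t, ∑ B : Mn n t, d A * c B * mono (A.1 ∪ B.1) y :=
          Finset.sum_congr rfl (fun y _ => expand y)
      _ = ∑ A : Mn n t, ∑ y : Pt n, ∑ B : Mn n t, d A * c B * mono (A.1 ∪ B.1) y :=
          Finset.sum_comm
      _ = ∑ A : Mn n t, ∑ B : Mn n t, ∑ y : Pt n, d A * c B * mono (A.1 ∪ B.1) y :=
          Finset.sum_congr rfl (fun A _ => Finset.sum_comm)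
      _ = 0 := by
          apply Finset.sum_eq_zero
          intro A _
          apply Finset.sum_eq_zero
          intro B _
          rw [← Finset.mul_sum, sum_mono_all]
          · exact mul_zero _
          · have h1 : (A.1 ∪ B.1).card ≤ A.1.card + B.1.card := Finset.card_union_le _ _
            have h2 := A.2
            have h3 := B.2
            omega
  -- the restriction map to S is bijective
  have hbij : Function.Bijective
      (fun (c : Mn n t → ZMod 2) (x : ↥S) => EF t c x.1) := by
    rw [Fintype.bijective_iff_injective_and_card]
    constructor
    · intro c1 c2 h
      have : (∀ x ∈ S, EF t (c1 + c2) x = 0) := by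
        intro x hx
        rw [EF_add]
        have := congrFun h ⟨x, hx⟩
        simp only at this
        rw [this]
        exact (z2add _ _).mpr rfl
      have h0 := hinj _ this
      funext a
      have := congrFun h0 a
      simp only [Pi.add_apply, Pi.zero_apply] at this
      exact (z2add _ _).mp this
    · rw [card_coeffs hn, Fintype.card_fun, Fintype.card_coe, hcard]
      rfl
  intro c hvanout
  -- show EF t c vanishes also on S
  have hvanin : ∀ x ∈ S, EF t c x = 0 := by
    intro x0 hx0
    obtain ⟨d, hd⟩ := hbij.2 (fun y : ↥S => if y = ⟨x0, hx0⟩ then 1 else 0)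
    have h1 : (∑ y : Pt n, EF t d y * EF t c y) = ∑ y ∈ S, EF t d y * EF t c y := by
      symm
      apply Finset.sum_subset (Finset.subset_univ S)
      intro y _ hy
      rw [hvanout y hy, mul_zero]
    have h2 : (∑ y ∈ S, EF t d y * EF t c y) = EF t c x0 := by
      rw [← Finset.sum_coe_sort S (fun y => EF t d y * EF t c y)]
      calc (∑ y : ↥S, EF t d y.1 * EF t c y.1)
          = ∑ y : ↥S, (if y = ⟨x0, hx0⟩ then 1 else 0) * EF t c y.1 := by
            apply Finset.sum_congr rfl
            intro y _
            exact congrArg (· * EF t c y.1) (congrFun hd y)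
        _ = EF t c x0 := by
            simp
    rw [orth c d] at h1
    rw [← h1] at h2
    exact h2.symm
  exact hinj c hvanin


lemma ge_half {n t : ℕ} (hn : n = 2 * t + 1) (f : Pt n → ZMod 2) (hf : NoA t f) :
    2 ^ (n - 1) ≤ (Finset.univ.filter (fun x : Pt n => f x = 1)).card := by
  classical
  set S1 := Finset.univ.filter (fun x : Pt n => f x = 1) with hS1
  have hinj : Function.Injective (fun (c : Mn n t → ZMod 2) (x : ↥S1) => EF t c x.1) := by
    intro c1 c2 h
    have h0 : c1 + c2 = 0 := by
      apply hf
      intro x hx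
      rw [EF_add]
      have := congrFun h ⟨x, by rw [hS1]; simp [hx]⟩
      simp only at this
      rw [this]
      exact (z2add _ _).mpr rfl
    funext a
    have := congrFun h0 a
    simp only [Pi.add_apply, Pi.zero_apply] at this
    exact (z2add _ _).mp this
  have := Fintype.card_le_of_injective _ hinj
  rw [card_coeffs hn, Fintype.card_fun, Fintype.card_coe] at this
  have h2 : (Fintype.card (ZMod 2)) = 2 := rfl
  rw [h2] at this
  exact (Nat.pow_le_pow_iff_right (by norm_num)).mp this

def Gf (n t : ℕ) : Pt n → ZMod 2 := fun x => if wtB x ≤ t then 1 else 0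

lemma Gf_eq_one {n t : ℕ} (x : Pt n) : Gf n t x = 1 ↔ wtB x ≤ t := by
  unfold Gf
  split <;> simp_all

lemma Gf_eq_zero {n t : ℕ} (x : Pt n) : Gf n t x = 0 ↔ ¬ wtB x ≤ t := by
  unfold Gf
  split <;> simp_all

lemma noA_G {n t : ℕ} : NoA t (Gf n t) := by
  intro c hvan
  have h2 : extc t c = 0 := by
    apply coeff_zero t
    · intro S h
      by_contra hS
      exact h (by simp [extc, hS])
    · intro S hS
      rw [← EF_eq]
      apply hvan
      rw [Gf_eq_one, wtB_ind]
      exact hS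
  funext S
  have := congrFun h2 S.1
  simpa [extc, S.2] using this

section ctx

variable {n t : ℕ}

lemma PhiY_bij (hn : n = 2 * t + 1) (Y : Fin (2 ^ (n - 1)) → Pt n)
    (hYran : Set.range Y = {x | Gf n t x = 1}) :
    Function.Bijective (fun (c : Mn n t → ZMod 2) (r : Fin (2 ^ (n - 1))) => EF t c (Y r)) := by
  rw [Fintype.bijective_iff_injective_and_card]
  constructor
  · intro c1 c2 h
    have h0 : c1 + c2 = 0 := by
      apply noA_G
      intro x hx
      have hxr : x ∈ Set.range Y := by rw [hYran]; exact hx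
      obtain ⟨r, rfl⟩ := hxr
      rw [EF_add]
      have := congrFun h r
      simp only at this
      rw [this]
      exact (z2add _ _).mpr rfl
    funext a
    have := congrFun h0 a
    simp only [Pi.add_apply, Pi.zero_apply] at this
    exact (z2add _ _).mp this
  · rw [card_coeffs hn, Fintype.card_fun, Fintype.card_fin]
    rfl

lemma EZ (Y Z : Fin (2 ^ (n - 1)) → Pt n)
    (W : Matrix (Fin (2 ^ (n - 1))) (Fin (2 ^ (n - 1))) (ZMod 2))
    (hW : W * VEnum t Y = VEnum t Z) (c : Mn n t → ZMod 2) (s : Fin (2 ^ (n - 1))) :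
    EF t c (Z s) = ∑ r, W s r * EF t c (Y r) := by
  have hentry : ∀ S : Mn n t, (∑ r, W s r * mono S.1 (Y r)) = mono S.1 (Z s) := by
    intro S
    have := congrFun (congrFun hW s) S
    rw [Matrix.mul_apply] at this
    exact this
  calc EF t c (Z s) = ∑ S : Mn n t, c S * mono S.1 (Z s) := rfl
    _ = ∑ S : Mn n t, c S * ∑ r, W s r * mono S.1 (Y r) := by
        apply Finset.sum_congr rfl
        intro S _
        rw [hentry]
    _ = ∑ S : Mn n t, ∑ r, W s r * (c S * mono S.1 (Y r)) := by
        apply Finset.sum_congr rfl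
        intro S _
        rw [Finset.mul_sum]
        apply Finset.sum_congr rfl
        intro r _
        ring
    _ = ∑ r, ∑ S : Mn n t, W s r * (c S * mono S.1 (Y r)) := Finset.sum_comm
    _ = ∑ r, W s r * EF t c (Y r) := by
        apply Finset.sum_congr rfl
        intro r _
        rw [← Finset.mul_sum]
        rfl

end ctx


lemma sum_emb {N k : ℕ} (s : Finset (Fin N)) (h : s.card = k) (F : Fin N → ZMod 2) :
    ∑ x ∈ s, F x = ∑ b : Fin k, F (s.orderEmbOfFin h b) := by
  symm
  apply Finset.sum_bij (i := fun (b : Fin k) (_ : b ∈ Finset.univ) => s.orderEmbOfFin h b)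
  · intro b _
    exact Finset.orderEmbOfFin_mem s h b
  · intro b1 _ b2 _ he
    exact (s.orderEmbOfFin h).injective he
  · intro x hx
    have : x ∈ Set.range ⇑(s.orderEmbOfFin h) := by
      rw [Finset.range_orderEmbOfFin]; exact hx
    obtain ⟨b, hb⟩ := this
    exact ⟨b, Finset.mem_univ b, hb⟩
  · intro b _
    rfl

lemma ker_iff_det {k : ℕ} (M : Matrix (Fin k) (Fin k) (ZMod 2)) :
    (∀ v : Fin k → ZMod 2, M.mulVec v = 0 → v = 0) ↔ IsUnit M.det := by
  haveI : Fact (Nat.Prime 2) := ⟨Nat.prime_two⟩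
  constructor
  · intro h
    rw [isUnit_iff_ne_zero]
    intro hdet
    obtain ⟨v, hv0, hv⟩ := Matrix.exists_mulVec_eq_zero_iff.mpr hdet
    exact hv0 (h v hv)
  · intro h v hv
    by_contra hv0
    have hdet := Matrix.exists_mulVec_eq_zero_iff.mp ⟨v, hv0, hv⟩
    rw [isUnit_iff_ne_zero] at h
    exact h hdet

lemma u_iff {N k : ℕ} (W : Matrix (Fin N) (Fin N) (ZMod 2)) (I J : Finset (Fin N))
    (hI : I.card = k) (hJ : J.card = k) :
    (∀ u : Fin N → ZMod 2, (∀ r, r ∉ I → u r = 0) →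
        (∀ s ∈ J, (∑ r, W s r * u r) = 0) → u = 0)
    ↔ IsUnit (W.submatrix (J.orderEmbOfFin hJ) (I.orderEmbOfFin hI)).det := by
  classical
  rw [← ker_iff_det]
  constructor
  · intro h v hv
    set u : Fin N → ZMod 2 := fun r => ∑ b, if (I.orderEmbOfFin hI) b = r then v b else 0 with hu
    have hu1 : ∀ b, u ((I.orderEmbOfFin hI) b) = v b := by
      intro b
      rw [hu]
      simp only
      rw [Finset.sum_eq_single b (fun b' _ hne =>
        if_neg (fun he => hne ((I.orderEmbOfFin hI).injective he))) (by simp)]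
      simp
    have hu0 : ∀ r, r ∉ I → u r = 0 := by
      intro r hr
      rw [hu]
      apply Finset.sum_eq_zero
      intro b _
      rw [if_neg]
      intro he
      exact hr (he ▸ Finset.orderEmbOfFin_mem I hI b)
    have hz := h u hu0 ?_
    · funext b
      rw [← hu1 b, hz]
      rfl
    · intro s hs
      obtain ⟨a, ha⟩ : ∃ a, (J.orderEmbOfFin hJ) a = s := by
        have : s ∈ Set.range ⇑(J.orderEmbOfFin hJ) := by rw [Finset.range_orderEmbOfFin]; exact hs
        exact this
      rw [← ha]
      calc (∑ r, W ((J.orderEmbOfFin hJ) a) r * u r) = ∑ r ∈ I, W ((J.orderEmbOfFin hJ) a) r * u r := by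
            symm
            apply Finset.sum_subset (Finset.subset_univ I)
            intro r _ hr
            rw [hu0 r hr, mul_zero]
        _ = ∑ b, W ((J.orderEmbOfFin hJ) a) ((I.orderEmbOfFin hI) b) * u ((I.orderEmbOfFin hI) b) :=
            sum_emb I hI (fun r => W ((J.orderEmbOfFin hJ) a) r * u r)
        _ = ∑ b, W.submatrix ⇑(J.orderEmbOfFin hJ) ⇑(I.orderEmbOfFin hI) a b * v b := by
            apply Finset.sum_congr rfl
            intro b _
            rw [hu1 b]
            rfl
        _ = (W.submatrix ⇑(J.orderEmbOfFin hJ) ⇑(I.orderEmbOfFin hI)).mulVec v a := rfl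
        _ = 0 := by rw [hv]; rfl
  · intro h u hu0 huJ
    set v : Fin k → ZMod 2 := fun b => u ((I.orderEmbOfFin hI) b) with hv
    have hMv : (W.submatrix ⇑(J.orderEmbOfFin hJ) ⇑(I.orderEmbOfFin hI)).mulVec v = 0 := by
      funext a
      calc (W.submatrix ⇑(J.orderEmbOfFin hJ) ⇑(I.orderEmbOfFin hI)).mulVec v a = ∑ b, W ((J.orderEmbOfFin hJ) a) ((I.orderEmbOfFin hI) b) * u ((I.orderEmbOfFin hI) b) := rfl
        _ = ∑ r ∈ I, W ((J.orderEmbOfFin hJ) a) r * u r :=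
            (sum_emb I hI (fun r => W ((J.orderEmbOfFin hJ) a) r * u r)).symm
        _ = ∑ r, W ((J.orderEmbOfFin hJ) a) r * u r := by
            apply Finset.sum_subset (Finset.subset_univ I)
            intro r _ hr
            rw [hu0 r hr, mul_zero]
        _ = 0 := huJ ((J.orderEmbOfFin hJ) a) (Finset.orderEmbOfFin_mem J hJ a)
    have hv0 := h v hMv
    funext r
    by_cases hr : r ∈ I
    · obtain ⟨b, hb⟩ : ∃ b, (I.orderEmbOfFin hI) b = r := by
        have : r ∈ Set.range ⇑(I.orderEmbOfFin hI) := by rw [Finset.range_orderEmbOfFin]; exact hr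
        exact this
      rw [← hb]
      exact congrFun hv0 b
    · exact hu0 r hr


def IdxI {n N : ℕ} (Y : Fin N → Pt n) (f : Pt n → ZMod 2) : Finset (Fin N) :=
  Finset.univ.filter (fun r => f (Y r) = 0)

def IdxJ {n N : ℕ} (Z : Fin N → Pt n) (f : Pt n → ZMod 2) : Finset (Fin N) :=
  Finset.univ.filter (fun s => f (Z s) = 1)

lemma not_mem_IdxI {n N : ℕ} {Y : Fin N → Pt n} {f : Pt n → ZMod 2} {r : Fin N} :
    r ∉ IdxI Y f ↔ f (Y r) = 1 := by
  unfold IdxI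
  simp only [Finset.mem_filter, Finset.mem_univ, true_and]
  rcases z2cases (f (Y r)) with h | h <;> simp [h]

lemma mem_IdxJ {n N : ℕ} {Z : Fin N → Pt n} {f : Pt n → ZMod 2} {s : Fin N} :
    s ∈ IdxJ Z f ↔ f (Z s) = 1 := by
  unfold IdxJ
  simp

section ctx2

variable {n t : ℕ} {Y Z : Fin (2 ^ (n - 1)) → Pt n}

lemma coverYZ (hYran : Set.range Y = {x | Gf n t x = 1})
    (hZran : Set.range Z = {x | Gf n t x = 0}) (x : Pt n) :
    (∃ r, Y r = x) ∨ (∃ s, Z s = x) := by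
  rcases z2cases (Gf n t x) with h | h
  · right
    have : x ∈ Set.range Z := by rw [hZran]; exact h
    exact this
  · left
    have : x ∈ Set.range Y := by rw [hYran]; exact h
    exact this

lemma noA_iff (hn : n = 2 * t + 1)
    (hYran : Set.range Y = {x | Gf n t x = 1})
    (hZran : Set.range Z = {x | Gf n t x = 0})
    (W : Matrix (Fin (2 ^ (n - 1))) (Fin (2 ^ (n - 1))) (ZMod 2))
    (hW : W * VEnum t Y = VEnum t Z) (f : Pt n → ZMod 2) :
    NoA t f ↔ ∀ u : Fin (2 ^ (n - 1)) → ZMod 2, (∀ r, r ∉ IdxI Y f → u r = 0) →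
      (∀ s ∈ IdxJ Z f, (∑ r, W s r * u r) = 0) → u = 0 := by
  constructor
  · intro hNoA u hu0 huJ
    obtain ⟨c, hc⟩ := (PhiY_bij hn Y hYran).2 u
    have hcr : ∀ r, EF t c (Y r) = u r := fun r => congrFun hc r
    have hc0 : c = 0 := by
      apply hNoA
      intro x hx
      rcases coverYZ hYran hZran x with ⟨r, rfl⟩ | ⟨s, rfl⟩
      · rw [hcr r]
        apply hu0
        rw [not_mem_IdxI]
        exact hx
      · rw [EZ Y Z W hW c s]
        rw [show (∑ r, W s r * EF t c (Y r)) = ∑ r, W s r * u r from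
          Finset.sum_congr rfl (fun r _ => by rw [hcr r])]
        exact huJ s (mem_IdxJ.mpr hx)
    funext r
    rw [← hcr r, hc0]
    simp [EF]
  · intro hRHS c hvan
    set u : Fin (2 ^ (n - 1)) → ZMod 2 := fun r => EF t c (Y r) with hu
    have hu0 : ∀ r, r ∉ IdxI Y f → u r = 0 := by
      intro r hr
      exact hvan (Y r) (not_mem_IdxI.mp hr)
    have huJ : ∀ s ∈ IdxJ Z f, (∑ r, W s r * u r) = 0 := by
      intro s hs
      rw [← EZ Y Z W hW c s]
      exact hvan (Z s) (mem_IdxJ.mp hs)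
    have huz := hRHS u hu0 huJ
    apply noA_G
    intro x hx
    have : x ∈ Set.range Y := by rw [hYran]; exact hx
    obtain ⟨r, rfl⟩ := this
    exact congrFun huz r

lemma onset_card (hYinj : Function.Injective Y) (hZinj : Function.Injective Z)
    (hYran : Set.range Y = {x | Gf n t x = 1})
    (hZran : Set.range Z = {x | Gf n t x = 0}) (f : Pt n → ZMod 2) :
    (Finset.univ.filter (fun x : Pt n => f x = 1)).card
      = (2 ^ (n - 1) - (IdxI Y f).card) + (IdxJ Z f).card := by
  classical
  have hsplit : Finset.univ.filter (fun x : Pt n => f x = 1)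
      = (IdxI Y f)ᶜ.image Y ∪ (IdxJ Z f).image Z := by
    ext x
    simp only [Finset.mem_filter, Finset.mem_univ, true_and, Finset.mem_union,
      Finset.mem_image, Finset.mem_compl]
    constructor
    · intro hx
      rcases coverYZ hYran hZran x with ⟨r, rfl⟩ | ⟨s, rfl⟩
      · exact Or.inl ⟨r, not_mem_IdxI.mpr hx, rfl⟩
      · exact Or.inr ⟨s, mem_IdxJ.mpr hx, rfl⟩
    · rintro (⟨r, hr, rfl⟩ | ⟨s, hs, rfl⟩)
      · exact not_mem_IdxI.mp hr
      · exact mem_IdxJ.mp hs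
  have hdisj : Disjoint ((IdxI Y f)ᶜ.image Y) ((IdxJ Z f).image Z) := by
    rw [Finset.disjoint_left]
    rintro x hx1 hx2
    rw [Finset.mem_image] at hx1 hx2
    obtain ⟨r, _, rfl⟩ := hx1
    obtain ⟨s, _, hzs⟩ := hx2
    have h1 : Gf n t (Y r) = 1 := by
      have : Y r ∈ Set.range Y := ⟨r, rfl⟩
      rwa [hYran] at this
    have h0 : Gf n t (Y r) = 0 := by
      have : Y r ∈ Set.range Z := ⟨s, hzs⟩
      rwa [hZran] at this
    rw [h1] at h0
    exact one_ne_zero h0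
  rw [hsplit, Finset.card_union_of_disjoint hdisj,
    Finset.card_image_of_injective _ hYinj, Finset.card_image_of_injective _ hZinj,
    Finset.card_compl, Fintype.card_fin]

lemma cards_eq (hn : n = 2 * t + 1)
    (hYinj : Function.Injective Y) (hZinj : Function.Injective Z)
    (hYran : Set.range Y = {x | Gf n t x = 1})
    (hZran : Set.range Z = {x | Gf n t x = 0}) (f : Pt n → ZMod 2)
    (h1 : NoA t f) (h2 : NoA t (fun x => f x + 1)) :
    (Finset.univ.filter (fun x : Pt n => f x = 1)).card = 2 ^ (n - 1) ∧
      (IdxJ Z f).card = (IdxI Y f).card := by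
  have hb1 := ge_half hn f h1
  have hb2 := ge_half hn _ h2
  have hfe : Finset.univ.filter (fun x : Pt n => (fun x => f x + 1) x = 1)
      = Finset.univ.filter (fun x : Pt n => ¬ f x = 1) := by
    apply Finset.filter_congr
    intro x _
    simp only
    constructor
    · intro h hc
      rw [hc] at h
      exact absurd h (by decide)
    · intro h
      rcases z2cases (f x) with h0 | h0
      · rw [h0]; rfl
      · exact absurd h0 h
  rw [hfe] at hb2
  have hsum : (Finset.univ.filter (fun x : Pt n => f x = 1)).card
      + (Finset.univ.filter (fun x : Pt n => ¬ f x = 1)).card = 2 ^ n := by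
    rw [Finset.card_filter_add_card_filter_not, Finset.card_univ]
    rw [Fintype.card_fun, Fintype.card_fin]
    rfl
  have h2n : 2 ^ n = 2 * 2 ^ (n - 1) := by
    rw [← pow_succ']
    congr 1
    omega
  have hbal : (Finset.univ.filter (fun x : Pt n => f x = 1)).card = 2 ^ (n - 1) := by omega
  refine ⟨hbal, ?_⟩
  have hoc := onset_card hYinj hZinj hYran hZran f
  have hIle : (IdxI Y f).card ≤ 2 ^ (n - 1) := by
    simpa using Finset.card_le_univ (IdxI Y f)

  omega

end ctx2


section ctx3

variable {n t : ℕ} {Y Z : Fin (2 ^ (n - 1)) → Pt n}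

lemma AI_to_cards (hn : n = 2 * t + 1)
    (hYinj : Function.Injective Y) (hZinj : Function.Injective Z)
    (hYran : Set.range Y = {x | Gf n t x = 1})
    (hZran : Set.range Z = {x | Gf n t x = 0}) (f : Pt n → ZMod 2)
    (hf : AI f = t + 1) : (IdxJ Z f).card = (IdxI Y f).card := by
  obtain ⟨h1, h2⟩ := (AI_eq_iff hn f).mp hf
  exact (cards_eq hn hYinj hZinj hYran hZran f h1 h2).2

lemma AI_iff_det (hn : n = 2 * t + 1)
    (hYinj : Function.Injective Y) (hZinj : Function.Injective Z)
    (hYran : Set.range Y = {x | Gf n t x = 1})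
    (hZran : Set.range Z = {x | Gf n t x = 0})
    (W : Matrix (Fin (2 ^ (n - 1))) (Fin (2 ^ (n - 1))) (ZMod 2))
    (hW : W * VEnum t Y = VEnum t Z) (f : Pt n → ZMod 2) (k : ℕ)
    (hIk : (IdxI Y f).card = k) (hJk : (IdxJ Z f).card = k) :
    AI f = t + 1 ↔ IsUnit (W.submatrix
      ⇑((IdxJ Z f).orderEmbOfFin hJk) ⇑((IdxI Y f).orderEmbOfFin hIk)).det := by
  constructor
  · intro hf
    obtain ⟨h1, _⟩ := (AI_eq_iff hn f).mp hf
    exact (u_iff W _ _ hIk hJk).mp ((noA_iff hn hYran hZran W hW f).mp h1)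
  · intro hdet
    have h1 : NoA t f :=
      (noA_iff hn hYran hZran W hW f).mpr ((u_iff W _ _ hIk hJk).mpr hdet)
    have hkN : k ≤ 2 ^ (n - 1) := by
      rw [← hIk]
      simpa using Finset.card_le_univ (IdxI Y f)
    have hbal : (Finset.univ.filter (fun x : Pt n => f x = 1)).card = 2 ^ (n - 1) := by
      rw [onset_card hYinj hZinj hYran hZran f, hIk, hJk]
      omega
    have h2 : NoA t (fun x => f x + 1) := by
      intro c hvan
      apply selfdual_transfer hn (Finset.univ.filter (fun x : Pt n => f x = 1)) hbal
      · intro c' hv'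
        apply h1
        intro x hx
        exact hv' x (by simp [hx])
      · intro x hx
        apply hvan
        have hfx : f x = 0 := by
          rcases z2cases (f x) with h | h
          · exact h
          · exact absurd (by simp [h] : x ∈ Finset.univ.filter (fun x : Pt n => f x = 1)) hx
        show f x + 1 = 1
        rw [hfx]
        rfl
    exact (AI_eq_iff hn f).mpr ⟨h1, h2⟩

lemma f_determined (hYran : Set.range Y = {x | Gf n t x = 1})
    (hZran : Set.range Z = {x | Gf n t x = 0}) (f g : Pt n → ZMod 2)
    (hI : IdxI Y f = IdxI Y g) (hJ : IdxJ Z f = IdxJ Z g) : f = g := by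
  funext x
  rcases coverYZ hYran hZran x with ⟨r, rfl⟩ | ⟨s, rfl⟩
  · by_cases hr : r ∈ IdxI Y f
    · have h1 : f (Y r) = 0 := by
        have := hr; unfold IdxI at this; simpa using this
      have h2 : g (Y r) = 0 := by
        rw [hI] at hr; unfold IdxI at hr; simpa using hr
      rw [h1, h2]
    · have h1 := not_mem_IdxI.mp hr
      rw [hI] at hr
      have h2 := not_mem_IdxI.mp hr
      rw [h1, h2]
  · by_cases hs : s ∈ IdxJ Z f
    · have h1 := mem_IdxJ.mp hs
      rw [hJ] at hs
      have h2 := mem_IdxJ.mp hs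
      rw [h1, h2]
    · have h1 : f (Z s) = 0 := by
        rcases z2cases (f (Z s)) with h | h
        · exact h
        · exact absurd (mem_IdxJ.mpr h) hs
      rw [hJ] at hs
      have h2 : g (Z s) = 0 := by
        rcases z2cases (g (Z s)) with h | h
        · exact h
        · exact absurd (mem_IdxJ.mpr h) hs
      rw [h1, h2]

lemma YZ_ne (hYran : Set.range Y = {x | Gf n t x = 1})
    (hZran : Set.range Z = {x | Gf n t x = 0}) (r s : Fin (2 ^ (n - 1))) :
    Y r ≠ Z s := by
  intro h
  have h1 : Gf n t (Y r) = 1 := by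
    have : Y r ∈ Set.range Y := ⟨r, rfl⟩
    rwa [hYran] at this
  have h0 : Gf n t (Y r) = 0 := by
    have : Y r ∈ Set.range Z := ⟨s, h.symm⟩
    rwa [hZran] at this
  rw [h1] at h0
  exact one_ne_zero h0

lemma surj_aux (hn : n = 2 * t + 1)
    (hYinj : Function.Injective Y) (hZinj : Function.Injective Z)
    (hYran : Set.range Y = {x | Gf n t x = 1})
    (hZran : Set.range Z = {x | Gf n t x = 0})
    (W : Matrix (Fin (2 ^ (n - 1))) (Fin (2 ^ (n - 1))) (ZMod 2))
    (hW : W * VEnum t Y = VEnum t Z) (k : ℕ)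
    (a b : Fin k → Fin (2 ^ (n - 1))) (ha : StrictMono a) (hb : StrictMono b)
    (hdet : IsUnit (W.submatrix a b).det) :
    ∃ f : Pt n → ZMod 2, AI f = t + 1 ∧
      IdxI Y f = Finset.image b Finset.univ ∧ IdxJ Z f = Finset.image a Finset.univ := by
  classical
  set f : Pt n → ZMod 2 := fun x =>
    if (∃ r, Y r = x ∧ r ∉ Finset.image b Finset.univ)
        ∨ (∃ s, Z s = x ∧ s ∈ Finset.image a Finset.univ) then 1 else 0 with hf
  have hfY : ∀ r, f (Y r) = if r ∈ Finset.image b Finset.univ then 0 else 1 := by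
    intro r
    rw [hf]
    simp only
    by_cases hr : r ∈ Finset.image b Finset.univ
    · rw [if_pos hr, if_neg]
      rintro (⟨r', hr', hr'n⟩ | ⟨s, hs, _⟩)
      · rw [hYinj hr'] at hr'n
        exact hr'n hr
      · exact YZ_ne hYran hZran r s hs.symm
    · rw [if_neg hr, if_pos]
      exact Or.inl ⟨r, rfl, hr⟩
  have hfZ : ∀ s, f (Z s) = if s ∈ Finset.image a Finset.univ then 1 else 0 := by
    intro s
    rw [hf]
    simp only
    by_cases hs : s ∈ Finset.image a Finset.univ
    · rw [if_pos hs, if_pos]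
      exact Or.inr ⟨s, rfl, hs⟩
    · rw [if_neg hs, if_neg]
      rintro (⟨r, hr, _⟩ | ⟨s', hs', hs'm⟩)
      · exact YZ_ne hYran hZran r s hr
      · rw [hZinj hs'] at hs'm
        exact hs hs'm
  have hIeq : IdxI Y f = Finset.image b Finset.univ := by
    ext r
    unfold IdxI
    simp only [Finset.mem_filter, Finset.mem_univ, true_and]
    rw [hfY r]
    by_cases hr : r ∈ Finset.image b Finset.univ <;> simp [hr]
  have hJeq : IdxJ Z f = Finset.image a Finset.univ := by
    ext s
    unfold IdxJ
    simp only [Finset.mem_filter, Finset.mem_univ, true_and]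
    rw [hfZ s]
    by_cases hs : s ∈ Finset.image a Finset.univ <;> simp [hs]
  have hIk : (IdxI Y f).card = k := by
    rw [hIeq, Finset.card_image_of_injective _ hb.injective, Finset.card_univ,
      Fintype.card_fin]
  have hJk : (IdxJ Z f).card = k := by
    rw [hJeq, Finset.card_image_of_injective _ ha.injective, Finset.card_univ,
      Fintype.card_fin]
  refine ⟨f, ?_, hIeq, hJeq⟩
  rw [AI_iff_det hn hYinj hZinj hYran hZran W hW f k hIk hJk]
  have hbemb : b = ⇑((IdxI Y f).orderEmbOfFin hIk) := by
    apply Finset.orderEmbOfFin_unique hIk _ hb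
    intro x
    rw [hIeq]
    exact Finset.mem_image_of_mem b (Finset.mem_univ x)
  have haemb : a = ⇑((IdxJ Z f).orderEmbOfFin hJk) := by
    apply Finset.orderEmbOfFin_unique hJk _ ha
    intro x
    rw [hJeq]
    exact Finset.mem_image_of_mem a (Finset.mem_univ x)
  rw [← hbemb, ← haemb]
  exact hdet

end ctx3

end S9

/-- with `G_n` the majority-type function (`1` on weight `≤ t`, `0` otherwise)
and `W = V(0_{G_n}) · V(1_{G_n})⁻¹`, the number of `n`-variable Boolean functions with
maximum algebraic immunity `t+1` equals the number of tuples
`(k; i₁ < … < i_k; j₁ < … < j_k)` whose associated `k × k` submatrix of `W` is invertible. -/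
theorem stmt_9 (n t : ℕ) (hn : n = 2 * t + 1)
    (Y Z : Fin (2 ^ (n - 1)) → (Fin n → ZMod 2))
    (hYinj : Function.Injective Y)
    (hYran : Set.range Y = {x | (if wtB x ≤ t then (1 : ZMod 2) else 0) = 1})
    (hZinj : Function.Injective Z)
    (hZran : Set.range Z = {x | (if wtB x ≤ t then (1 : ZMod 2) else 0) = 0})
    (W : Matrix (Fin (2 ^ (n - 1))) (Fin (2 ^ (n - 1))) (ZMod 2))
    (hW : W * VEnum t Y = VEnum t Z) :
    Nat.card {f : (Fin n → ZMod 2) → ZMod 2 // AI f = t + 1} =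
      Nat.card {q : (k : Fin (2 ^ (n - 1) + 1)) ×
          (Fin (k : ℕ) → Fin (2 ^ (n - 1))) × (Fin (k : ℕ) → Fin (2 ^ (n - 1))) //
        StrictMono q.2.1 ∧ StrictMono q.2.2 ∧ IsUnit (W.submatrix q.2.1 q.2.2).det} := by
  classical
  have hYran' : Set.range Y = {x | S9.Gf n t x = 1} := hYran
  have hZran' : Set.range Z = {x | S9.Gf n t x = 0} := hZran
  let F : {f : (Fin n → ZMod 2) → ZMod 2 // AI f = t + 1} →
      {q : (k : Fin (2 ^ (n - 1) + 1)) ×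
          (Fin (k : ℕ) → Fin (2 ^ (n - 1))) × (Fin (k : ℕ) → Fin (2 ^ (n - 1))) //
        StrictMono q.2.1 ∧ StrictMono q.2.2 ∧ IsUnit (W.submatrix q.2.1 q.2.2).det} :=
    fun fp =>
      ⟨⟨⟨(S9.IdxI Y fp.1).card,
          Nat.lt_succ_of_le (by simpa using Finset.card_le_univ (S9.IdxI Y fp.1))⟩,
        ⇑((S9.IdxJ Z fp.1).orderEmbOfFin
            (S9.AI_to_cards hn hYinj hZinj hYran' hZran' fp.1 fp.2)),
        ⇑((S9.IdxI Y fp.1).orderEmbOfFin rfl)⟩,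
        ((S9.IdxJ Z fp.1).orderEmbOfFin
            (S9.AI_to_cards hn hYinj hZinj hYran' hZran' fp.1 fp.2)).strictMono,
        ((S9.IdxI Y fp.1).orderEmbOfFin rfl).strictMono,
        (S9.AI_iff_det hn hYinj hZinj hYran' hZran' W hW fp.1 (S9.IdxI Y fp.1).card rfl
            (S9.AI_to_cards hn hYinj hZinj hYran' hZran' fp.1 fp.2)).mp fp.2⟩
  refine Nat.card_congr (Equiv.ofBijective F ⟨?_, ?_⟩)
  · rintro ⟨f1, h1⟩ ⟨f2, h2⟩ he
    have hq := congrArg Subtype.val he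
    have hrange := congrArg (fun q : (k : Fin (2 ^ (n - 1) + 1)) ×
        (Fin (k : ℕ) → Fin (2 ^ (n - 1))) × (Fin (k : ℕ) → Fin (2 ^ (n - 1))) =>
      (Set.range q.2.1, Set.range q.2.2)) hq
    simp only [F, Finset.range_orderEmbOfFin, Prod.mk.injEq] at hrange
    obtain ⟨hJ, hI⟩ := hrange
    exact Subtype.ext (S9.f_determined hYran' hZran' f1 f2
      (Finset.coe_inj.mp hI) (Finset.coe_inj.mp hJ))
  · rintro ⟨⟨⟨kv, hkv⟩, a, b⟩, ha, hb, hdet⟩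
    obtain ⟨f, hAI, hIeq, hJeq⟩ :=
      S9.surj_aux hn hYinj hZinj hYran' hZran' W hW kv a b ha hb hdet
    refine ⟨⟨f, hAI⟩, ?_⟩
    apply Subtype.ext
    have hc : (S9.IdxI Y f).card = kv := by
      rw [hIeq, Finset.card_image_of_injective _ hb.injective, Finset.card_univ,
        Fintype.card_fin]
    subst hc
    have hJc : (S9.IdxJ Z f).card = (S9.IdxI Y f).card :=
      S9.AI_to_cards hn hYinj hZinj hYran' hZran' f hAI
    have h1 : b = ⇑((S9.IdxI Y f).orderEmbOfFin rfl) := by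
      have hb' : StrictMono (show Fin (S9.IdxI Y f).card → Fin (2 ^ (n - 1)) from b) := hb
      refine Finset.orderEmbOfFin_unique (s := S9.IdxI Y f) (k := (S9.IdxI Y f).card)
        (f := (show Fin (S9.IdxI Y f).card → Fin (2 ^ (n - 1)) from b)) rfl ?_ hb'
      intro x
      have hx : b x ∈ Finset.image b Finset.univ :=
        Finset.mem_image_of_mem b (Finset.mem_univ x)
      rwa [← hIeq] at hx
    have h2 : a = ⇑((S9.IdxJ Z f).orderEmbOfFin hJc) := by
      apply Finset.orderEmbOfFin_unique hJc _ ha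
      intro x
      have hx : a x ∈ Finset.image a Finset.univ :=
        Finset.mem_image_of_mem a (Finset.mem_univ x)
      rwa [← hJeq] at hx
    show (F ⟨f, hAI⟩).val = _
    have hpair : ((⇑((S9.IdxJ Z f).orderEmbOfFin hJc), ⇑((S9.IdxI Y f).orderEmbOfFin rfl)) :
        (Fin ((S9.IdxI Y f).card) → Fin (2 ^ (n - 1))) ×
          (Fin ((S9.IdxI Y f).card) → Fin (2 ^ (n - 1)))) = (a, b) := by
      rw [h1, h2]
    exact congrArg (fun p : (Fin ((S9.IdxI Y f).card) → Fin (2 ^ (n - 1))) ×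
        (Fin ((S9.IdxI Y f).card) → Fin (2 ^ (n - 1))) =>
      (⟨⟨(S9.IdxI Y f).card, hkv⟩, p⟩ : (k : Fin (2 ^ (n - 1) + 1)) ×
          ((Fin (k : ℕ) → Fin (2 ^ (n - 1))) × (Fin (k : ℕ) → Fin (2 ^ (n - 1)))))) hpair
end

section
/- Let n be a positive integer and f a Boolean function of n variables. Then AI(f) ≤ ⌈n/2⌉. -/
namespace Stmt12Aux
variable {n : ℕ}

lemma zmod2_cases (a : ZMod 2) : a = 0 ∨ a = 1 := by revert a; decide

lemma prod_mon (T : Finset (Fin n)) (x : Fin n → ZMod 2) :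
    ∏ i ∈ T, x i = if ∀ i ∈ T, x i = 1 then 1 else 0 := by
  by_cases h : ∀ i ∈ T, x i = 1
  · rw [if_pos h]; exact Finset.prod_eq_one h
  · rw [if_neg h]
    push_neg at h
    obtain ⟨i, hi, hne⟩ := h
    rcases zmod2_cases (x i) with h0 | h1
    · exact Finset.prod_eq_zero hi h0
    · exact absurd h1 hne

lemma card_count (S T : Finset (Fin n)) :
    (Finset.univ.filter (fun x : Fin n → ZMod 2 =>
      (∀ i, x i = 1 → i ∈ S) ∧ ∀ i ∈ T, x i = 1)).card = (Finset.Icc T S).card := by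
  apply Finset.card_bij (fun x _ => Finset.univ.filter (fun i => x i = 1))
  · intro x hx
    simp only [Finset.mem_filter, Finset.mem_univ, true_and] at hx ⊢
    rw [Finset.mem_Icc]
    constructor
    · intro i hi; simp only [Finset.mem_filter, Finset.mem_univ, true_and]
      exact hx.2 i hi
    · intro i hi; simp only [Finset.mem_filter, Finset.mem_univ, true_and] at hi
      exact hx.1 i hi
  · intro x hx y hy hxy
    funext i
    have : (i ∈ Finset.univ.filter (fun i => x i = 1)) ↔
        (i ∈ Finset.univ.filter (fun i => y i = 1)) := by rw [hxy]
    simp only [Finset.mem_filter, Finset.mem_univ, true_and] at this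
    rcases zmod2_cases (x i) with h0 | h1 <;> rcases zmod2_cases (y i) with g0 | g1 <;>
      simp_all
  · intro U hU
    rw [Finset.mem_Icc] at hU
    refine ⟨fun i => if i ∈ U then 1 else 0, ?_, ?_⟩
    · simp only [Finset.mem_filter, Finset.mem_univ, true_and]
      constructor
      · intro i hi
        by_cases h : i ∈ U
        · exact hU.2 h
        · simp [h] at hi
      · intro i hi; simp [hU.1 hi]
    · ext i
      simp only [Finset.mem_filter, Finset.mem_univ, true_and]
      by_cases h : i ∈ U <;> simp [h]

lemma anfCoeff_monomial (T S : Finset (Fin n)) :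
    anfCoeff (fun x => ∏ i ∈ T, x i) S = if S = T then 1 else 0 := by
  unfold anfCoeff
  simp_rw [prod_mon]
  rw [Finset.sum_ite, Finset.sum_const_zero, add_zero, Finset.sum_const, nsmul_eq_mul, mul_one,
    Finset.filter_filter]
  rw [card_count S T]
  by_cases hTS : T ⊆ S
  · rw [Finset.card_Icc_finset hTS]
    by_cases hST : S = T
    · subst hST; simp
    · have hlt : T.card < S.card :=
        Finset.card_lt_card (lt_of_le_of_ne hTS (fun h => hST h.symm))
      rw [if_neg hST]
      obtain ⟨k, hk⟩ : ∃ k, S.card - T.card = k + 1 := ⟨S.card - T.card - 1, by omega⟩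
      rw [hk, pow_succ, Nat.cast_mul]
      have h2 : ((2:ℕ) : ZMod 2) = 0 := by decide
      rw [h2, mul_zero]
  · rw [Finset.Icc_eq_empty (fun h => hTS h), Finset.card_empty,
      if_neg (fun h => hTS (by rw [h]))]
    simp


lemma anfCoeff_sum {ι : Type*} (s : Finset ι) (F : ι → (Fin n → ZMod 2) → ZMod 2)
    (S : Finset (Fin n)) :
    anfCoeff (fun x => ∑ j ∈ s, F j x) S = ∑ j ∈ s, anfCoeff (F j) S := by
  unfold anfCoeff; rw [Finset.sum_comm]

lemma exists_annihilator (D : ℕ) (h : (Fin n → ZMod 2) → ZMod 2)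
    (hcard : (Finset.univ.filter (fun x => h x = 1)).card <
      Fintype.card {S : Finset (Fin n) // S.card ≤ D}) :
    ∃ g, IsAnnihilator h g ∧ degB g ≤ D := by
  classical
  set T : Finset (Fin n → ZMod 2) := Finset.univ.filter (fun x => h x = 1) with hT
  let M := {S : Finset (Fin n) // S.card ≤ D}
  let Φ : (M → ZMod 2) → ({x // x ∈ T} → ZMod 2) :=
    fun c t => ∑ S : M, c S * ∏ i ∈ S.1, t.1 i
  have hninj : ¬ Function.Injective Φ := by
    intro hinj
    have hle := Fintype.card_le_of_injective Φ hinj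
    rw [Fintype.card_fun, Fintype.card_fun, Fintype.card_coe] at hle
    have hlt : Fintype.card M ≤ T.card :=
      (Nat.pow_le_pow_iff_right (by norm_num : 1 < Fintype.card (ZMod 2))).mp hle
    exact absurd hlt (not_le.mpr hcard)
  obtain ⟨c₁, c₂, hΦ, hne⟩ := Function.not_injective_iff.mp hninj
  set c : M → ZMod 2 := fun S => c₁ S + c₂ S with hc
  have key2 : ∀ a b : ZMod 2, a + b = 0 → a = b := by decide
  have hcne : c ≠ 0 := by
    intro h0
    apply hne
    funext S
    exact key2 _ _ (congrFun h0 S)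
  set g : (Fin n → ZMod 2) → ZMod 2 := fun x => ∑ S : M, c S * ∏ i ∈ S.1, x i with hg
  have hgT : ∀ x ∈ T, g x = 0 := by
    intro x hx
    have h1 : Φ c₁ ⟨x, hx⟩ = Φ c₂ ⟨x, hx⟩ := by rw [hΦ]
    have : g x = Φ c₁ ⟨x, hx⟩ + Φ c₂ ⟨x, hx⟩ := by
      simp only [hg, hc, Φ, add_mul, Finset.sum_add_distrib]
    rw [this, h1, CharTwo.add_self_eq_zero]
  have hanf : ∀ S' : Finset (Fin n), anfCoeff g S' =
      ∑ S : M, c S * (if S' = S.1 then 1 else 0) := by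
    intro S'
    have := anfCoeff_sum (n := n) Finset.univ (fun (S : M) x => c S * ∏ i ∈ S.1, x i) S'
    rw [hg]
    rw [this]
    apply Finset.sum_congr rfl
    intro S _
    have : anfCoeff (fun x => c S * ∏ i ∈ S.1, x i) S' = c S * anfCoeff (fun x => ∏ i ∈ S.1, x i) S' := by
      unfold anfCoeff; rw [Finset.mul_sum]
    rw [this, anfCoeff_monomial]
  have hanf_le : ∀ (S' : Finset (Fin n)) (h' : S'.card ≤ D),
      anfCoeff g S' = c ⟨S', h'⟩ := by
    intro S' h'
    rw [hanf]
    rw [Finset.sum_eq_single (⟨S', h'⟩ : M)]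
    · simp
    · intro S _ hSne
      rw [if_neg, mul_zero]
      intro hEq
      exact hSne (Subtype.ext hEq.symm)
    · intro habs; exact absurd (Finset.mem_univ _) habs
  have hanf_gt : ∀ S' : Finset (Fin n), D < S'.card → anfCoeff g S' = 0 := by
    intro S' h'
    rw [hanf]
    apply Finset.sum_eq_zero
    intro S _
    rw [if_neg, mul_zero]
    intro hEq
    rw [hEq] at h'
    exact absurd S.2 (not_le.mpr h')
  refine ⟨g, ⟨?_, ?_⟩, ?_⟩
  · -- g ≠ 0
    intro h0
    apply hcne
    funext S
    have := hanf_le S.1 S.2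
    rw [h0] at this
    have hz : anfCoeff (n := n) 0 S.1 = 0 := by
      unfold anfCoeff; simp
    rw [hz] at this
    rw [Subtype.eta] at this
    exact this.symm
  · -- annihilator
    intro x
    rcases zmod2_cases (h x) with h0 | h1
    · rw [h0, zero_mul]
    · have hx : x ∈ T := by rw [hT]; simp [h1]
      rw [hgT x hx, mul_zero]
  · -- degree
    apply Finset.sup_le
    intro S' hS'
    rw [Finset.mem_filter] at hS'
    by_contra hgt
    exact hS'.2 (hanf_gt S' (not_le.mp hgt))

lemma card_M_lt (hn : 0 < n) :
    2 ^ (n - 1) < Fintype.card {S : Finset (Fin n) // S.card ≤ (n + 1) / 2} := by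
  classical
  set D := (n + 1) / 2 with hD
  rw [Fintype.card_subtype]
  set A := Finset.univ.filter (fun S : Finset (Fin n) => S.card ≤ D) with hA
  set B := Finset.univ.filter (fun S : Finset (Fin n) => ¬ S.card ≤ D) with hB
  have hcardle : ∀ S : Finset (Fin n), S.card ≤ n := by
    intro S
    calc S.card ≤ (Finset.univ : Finset (Fin n)).card := Finset.card_le_card (Finset.subset_univ S)
    _ = n := by rw [Finset.card_univ, Fintype.card_fin]
  have hAB : A.card + B.card = 2 ^ n := by
    rw [hA, hB, Finset.card_filter_add_card_filter_not, Finset.card_univ,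
      Fintype.card_finset, Fintype.card_fin]
  obtain ⟨S₀, _, hS₀card⟩ := Finset.exists_subset_card_eq (s := (Finset.univ : Finset (Fin n))) (n := D)
    (by rw [Finset.card_univ, Fintype.card_fin]; omega)
  have hcompl : ∀ S : Finset (Fin n), Sᶜ.card = n - S.card := by
    intro S; rw [Finset.card_compl, Fintype.card_fin]
  have hBA : B.card < A.card := by
    have himg : B.image compl ⊆ A := by
      intro U hU
      rw [Finset.mem_image] at hU
      obtain ⟨S, hS, rfl⟩ := hU
      rw [hB, Finset.mem_filter] at hS
      rw [hA, Finset.mem_filter]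
      refine ⟨Finset.mem_univ _, ?_⟩
      have := hcardle S
      rw [hcompl]
      omega
    have hSimg : S₀ ∉ B.image compl := by
      intro hmem
      rw [Finset.mem_image] at hmem
      obtain ⟨S, hS, hEq⟩ := hmem
      rw [hB, Finset.mem_filter] at hS
      have h1 : Sᶜ.card = S₀.card := by rw [hEq]
      rw [hcompl] at h1
      have := hcardle S
      omega
    have hS₀A : S₀ ∈ A := by rw [hA, Finset.mem_filter]; exact ⟨Finset.mem_univ _, le_of_eq hS₀card⟩
    have hss : B.image compl ⊂ A := ⟨himg, fun hsub => hSimg (hsub hS₀A)⟩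
    calc B.card = (B.image compl).card :=
      (Finset.card_image_of_injOn (fun a _ b _ hab => compl_injective hab)).symm
    _ < A.card := Finset.card_lt_card hss
  have h2n : 2 ^ n = 2 * 2 ^ (n - 1) := by
    obtain ⟨m, rfl⟩ : ∃ m, n = m + 1 := ⟨n - 1, by omega⟩
    rw [Nat.add_sub_cancel, pow_succ, Nat.mul_comm]
  omega

end Stmt12Aux

/-- `AI(f) ≤ ⌈n/2⌉` for every `n`-variable Boolean function `f`. -/
theorem stmt_12 (n : ℕ) (hn : 0 < n) (f : (Fin n → ZMod 2) → ZMod 2) :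
    AI f ≤ (n + 1) / 2 := by
  classical
  have hM := Stmt12Aux.card_M_lt (n := n) hn
  have h2n : 2 ^ n = 2 * 2 ^ (n - 1) := by
    obtain ⟨m, rfl⟩ : ∃ m, n = m + 1 := ⟨n - 1, by omega⟩
    rw [Nat.add_sub_cancel, pow_succ, Nat.mul_comm]
  have hsplit : (Finset.univ.filter (fun x : Fin n → ZMod 2 => f x = 1)).card +
      (Finset.univ.filter (fun x : Fin n → ZMod 2 => f x + 1 = 1)).card = 2 ^ n := by
    have heq : Finset.univ.filter (fun x : Fin n → ZMod 2 => f x + 1 = 1) =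
        Finset.univ.filter (fun x : Fin n → ZMod 2 => ¬ f x = 1) := by
      apply Finset.filter_congr
      intro x _
      have key : ∀ a : ZMod 2, (a + 1 = 1) ↔ ¬ (a = 1) := by decide
      exact key (f x)
    rw [heq, Finset.card_filter_add_card_filter_not, Finset.card_univ]
    simp [Fintype.card_fun]
  rcases le_or_gt (Finset.univ.filter (fun x : Fin n → ZMod 2 => f x = 1)).card (2 ^ (n - 1))
    with hle | hlt
  · obtain ⟨g, hg, hdeg⟩ :=
      Stmt12Aux.exists_annihilator ((n + 1) / 2) f (lt_of_le_of_lt hle hM)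
    unfold AI
    exact le_trans (Nat.sInf_le ⟨g, Or.inl hg, rfl⟩) hdeg
  · have hle2 : (Finset.univ.filter
        (fun x : Fin n → ZMod 2 => (fun x => f x + 1) x = 1)).card ≤ 2 ^ (n - 1) := by
      simp only []
      omega
    obtain ⟨g, hg, hdeg⟩ :=
      Stmt12Aux.exists_annihilator ((n + 1) / 2) (fun x => f x + 1) (lt_of_le_of_lt hle2 hM)
    unfold AI
    exact le_trans (Nat.sInf_le ⟨g, Or.inr hg, rfl⟩) hdeg
end

section
/- Let n = 2t+1 be an odd positive integer and f a Boolean function of n variables with AI(f) = t+1. Then f is balanced, i.e., wt(f) = 2^{n−1}. -/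
lemma zmod2_cases : ∀ a : ZMod 2, a = 0 ∨ a = 1 := by decide

lemma cast_two_pow (m : ℕ) : ((2 ^ m : ℕ) : ZMod 2) = if m = 0 then 1 else 0 := by
  cases m with
  | zero => simp
  | succ k =>
    have h2 : ((2 : ℕ) : ZMod 2) = 0 := by decide
    rw [pow_succ, Nat.cast_mul, h2, mul_zero, if_neg k.succ_ne_zero]

lemma anfCoeff_mono {n : ℕ} (T S : Finset (Fin n)) :
    anfCoeff (fun x => ∏ i ∈ T, x i) S = if S = T then 1 else 0 := by
  unfold anfCoeff
  have hreindex :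
      ∑ x ∈ Finset.univ.filter (fun x : Fin n → ZMod 2 => ∀ i, x i = 1 → i ∈ S),
        ∏ i ∈ T, x i
      = ∑ U ∈ S.powerset, ∏ i ∈ T, (if i ∈ U then (1 : ZMod 2) else 0) := by
    refine Finset.sum_nbij' (i := fun x => Finset.univ.filter (fun i => x i = 1))
      (j := fun U => fun i => if i ∈ U then (1 : ZMod 2) else 0)
      ?_ ?_ ?_ ?_ ?_
    · intro x hx
      simp only [Finset.mem_filter, Finset.mem_univ, true_and] at hx
      simp only [Finset.mem_powerset]
      intro i hi
      simp only [Finset.mem_filter, Finset.mem_univ, true_and] at hi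
      exact hx i hi
    · intro U hU
      simp only [Finset.mem_powerset] at hU
      simp only [Finset.mem_filter, Finset.mem_univ, true_and]
      intro i hi
      by_cases h : i ∈ U
      · exact hU h
      · simp [h] at hi
    · intro x hx
      funext i
      simp only [Finset.mem_filter, Finset.mem_univ, true_and]
      by_cases h : x i = 1
      · simp [h]
      · have := zmod2_cases (x i)
        simp only [h, if_false]
        tauto
    · intro U hU
      ext i
      simp only [Finset.mem_filter, Finset.mem_univ, true_and]
      by_cases h : i ∈ U <;> simp [h]
    · intro x hx
      refine Finset.prod_congr rfl fun i hi => ?_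
      simp only [Finset.mem_filter, Finset.mem_univ, true_and]
      by_cases h : x i = 1
      · simp [h]
      · have := zmod2_cases (x i)
        simp only [h, if_false]
        tauto
  rw [hreindex]
  have hterm : ∀ U : Finset (Fin n),
      (∏ i ∈ T, (if i ∈ U then (1 : ZMod 2) else 0))
        = if T ⊆ U then 1 else 0 := by
    intro U
    by_cases h : T ⊆ U
    · rw [if_pos h, Finset.prod_eq_one]
      intro i hi; simp [h hi]
    · rw [if_neg h]
      obtain ⟨i, hiT, hiU⟩ := Finset.not_subset.mp h
      exact Finset.prod_eq_zero hiT (by simp [hiU])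
  simp_rw [hterm]
  rw [Finset.sum_boole]
  have hIcc : S.powerset.filter (fun U => T ⊆ U) = Finset.Icc T S := by
    rw [Finset.Icc_eq_filter_powerset]
  rw [hIcc]
  by_cases hTS : T ⊆ S
  · rw [Finset.card_Icc_finset hTS, cast_two_pow]
    by_cases hST : S = T
    · subst hST; simp
    · have hlt : T.card < S.card :=
        Finset.card_lt_card (lt_of_le_of_ne hTS (fun h => hST h.symm))
      rw [if_neg (by omega), if_neg hST]
  · have h1 : Finset.Icc T S = ∅ := by
      rw [Finset.Icc_eq_empty_iff]
      exact fun h => hTS h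
    have h2 : S ≠ T := fun h => hTS (h ▸ le_refl S : T ⊆ S)
    rw [h1, if_neg h2]
    simp

/-- The Boolean function with coefficient vector `d` supported on monomials of degree `≤ D`. -/
def gFun {n : ℕ} (D : ℕ) (d : {S : Finset (Fin n) // S.card ≤ D} → ZMod 2) :
    (Fin n → ZMod 2) → ZMod 2 :=
  fun x => ∑ S : {S : Finset (Fin n) // S.card ≤ D}, d S * ∏ i ∈ S.1, x i

lemma anfCoeff_gFun {n : ℕ} (D : ℕ) (d : {S : Finset (Fin n) // S.card ≤ D} → ZMod 2)
    (S : Finset (Fin n)) :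
    anfCoeff (gFun D d) S = if h : S.card ≤ D then d ⟨S, h⟩ else 0 := by
  unfold anfCoeff gFun
  rw [Finset.sum_comm]
  have : ∀ T : {S : Finset (Fin n) // S.card ≤ D},
      ∑ x ∈ Finset.univ.filter (fun x : Fin n → ZMod 2 => ∀ i, x i = 1 → i ∈ S),
        d T * ∏ i ∈ T.1, x i
      = d T * (if S = T.1 then 1 else 0) := by
    intro T
    rw [← Finset.mul_sum]
    congr 1
    exact anfCoeff_mono T.1 S
  simp_rw [this]
  by_cases h : S.card ≤ D
  · rw [dif_pos h]
    rw [Finset.sum_eq_single ⟨S, h⟩]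
    · simp
    · intro b _ hb
      rw [if_neg, mul_zero]
      intro hSb
      exact hb (by ext1; exact hSb.symm)
    · intro hS; exact absurd (Finset.mem_univ _) hS
  · rw [dif_neg h]
    apply Finset.sum_eq_zero
    intro T _
    rw [if_neg, mul_zero]
    intro hST
    exact h (hST ▸ T.2)

lemma degB_gFun_le {n : ℕ} (D : ℕ) (d : {S : Finset (Fin n) // S.card ≤ D} → ZMod 2) :
    degB (gFun D d) ≤ D := by
  apply Finset.sup_le
  intro S hS
  simp only [Finset.mem_filter, Finset.mem_univ, true_and] at hS
  by_contra h
  rw [anfCoeff_gFun, dif_neg (fun hh => h hh)] at hS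
  exact hS rfl

lemma gFun_ne_zero {n : ℕ} (D : ℕ) (d : {S : Finset (Fin n) // S.card ≤ D} → ZMod 2)
    (hd : d ≠ 0) : gFun D d ≠ 0 := by
  intro hg
  apply hd
  funext S
  have := anfCoeff_gFun D d S.1
  rw [dif_pos S.2, hg] at this
  have h0 : anfCoeff (0 : (Fin n → ZMod 2) → ZMod 2) S.1 = 0 := by
    unfold anfCoeff; simp
  rw [h0] at this
  simp [← this]

lemma card_subtype_le {n t : ℕ} (hn : n = 2 * t + 1) :
    Fintype.card {S : Finset (Fin n) // S.card ≤ t} = 2 ^ (n - 1) := by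
  rw [Fintype.card_subtype]
  have : (Finset.univ.filter (fun S : Finset (Fin n) => S.card ≤ t))
      = (Finset.range (t + 1)).biUnion (fun k => Finset.powersetCard k Finset.univ) := by
    ext S
    simp only [Finset.mem_filter, Finset.mem_univ, true_and, Finset.mem_biUnion,
      Finset.mem_range, Finset.mem_powersetCard]
    constructor
    · intro h; exact ⟨S.card, by omega, S.subset_univ, rfl⟩
    · rintro ⟨k, hk, -, rfl⟩; omega
  rw [this, Finset.card_biUnion]
  · have hcard : ∀ k, (Finset.powersetCard k (Finset.univ : Finset (Fin n))).card
        = (2 * t + 1).choose k := by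
      intro k
      rw [Finset.card_powersetCard, Finset.card_univ, Fintype.card_fin, hn]
    simp_rw [hcard]
    rw [Nat.sum_range_choose_halfway t]
    subst hn
    simp [pow_mul]
  · intro a _ b _ hab
    apply Finset.disjoint_left.mpr
    intro S hS hS'
    rw [Finset.mem_powersetCard] at hS hS'
    exact hab (hS.2 ▸ hS'.2 ▸ rfl)

lemma exists_annih {n t : ℕ} (hn : n = 2 * t + 1) (h : (Fin n → ZMod 2) → ZMod 2)
    (hc : Nat.card {x : Fin n → ZMod 2 // h x = 1} < 2 ^ (n - 1)) :
    ∃ g : (Fin n → ZMod 2) → ZMod 2, g ≠ 0 ∧ (∀ x, h x * g x = 0) ∧ degB g ≤ t := by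
  set A := {x : Fin n → ZMod 2 // h x = 1}
  set V := {S : Finset (Fin n) // S.card ≤ t} → ZMod 2
  have hcards : Fintype.card (A → ZMod 2) < Fintype.card V := by
    rw [Fintype.card_fun, Fintype.card_fun, card_subtype_le hn]
    have : Fintype.card (ZMod 2) = 2 := by decide
    rw [this]
    rw [Nat.card_eq_fintype_card] at hc
    exact Nat.pow_lt_pow_right one_lt_two hc
  obtain ⟨c, c', hne, heq⟩ := Fintype.exists_ne_map_eq_of_card_lt
    (fun d : V => (fun x : A => gFun t d x.1)) hcards
  set d : V := c + c' with hd
  have hdne : d ≠ 0 := by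
    intro h0
    apply hne
    funext S
    have : c S + c' S = 0 := congrFun h0 S
    rcases zmod2_cases (c S) with h1 | h1 <;> rcases zmod2_cases (c' S) with h2 | h2 <;>
      simp [h1, h2] at this ⊢
  have hvanish : ∀ x : A, gFun t d x.1 = 0 := by
    intro x
    have h1 : gFun t c x.1 = gFun t c' x.1 := congrFun heq x
    have h2 : gFun t d x.1 = gFun t c x.1 + gFun t c' x.1 := by
      unfold gFun
      rw [← Finset.sum_add_distrib]
      apply Finset.sum_congr rfl
      intro S _
      rw [hd, Pi.add_apply, add_mul]
    rw [h2, h1, ← two_mul]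
    have : (2 : ZMod 2) = 0 := by decide
    rw [this, zero_mul]
  refine ⟨gFun t d, gFun_ne_zero t d hdne, ?_, degB_gFun_le t d⟩
  intro x
  rcases zmod2_cases (h x) with h1 | h1
  · rw [h1, zero_mul]
  · rw [hvanish ⟨x, h1⟩, mul_zero]


/-- for odd `n = 2t+1`, a Boolean function with maximum algebraic immunity
`t+1` is balanced. -/
theorem stmt_13 (n t : ℕ) (hn : n = 2 * t + 1) (f : (Fin n → ZMod 2) → ZMod 2)
    (hf : AI f = t + 1) :
    Nat.card {x : Fin n → ZMod 2 // f x = 1} = 2 ^ (n - 1) := by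
  set A := Nat.card {x : Fin n → ZMod 2 // f x = 1} with hA
  have htotal : Fintype.card (Fin n → ZMod 2) = 2 ^ n := by
    rw [Fintype.card_fun]
    norm_num
  have hAle : A ≤ 2 ^ n := by
    rw [hA, Nat.card_eq_fintype_card, ← htotal]
    exact Fintype.card_subtype_le _
  have hcompl : Nat.card {x : Fin n → ZMod 2 // f x + 1 = 1} = 2 ^ n - A := by
    rw [hA, Nat.card_eq_fintype_card, Nat.card_eq_fintype_card]
    have hequiv : Fintype.card {x : Fin n → ZMod 2 // f x + 1 = 1}
        = Fintype.card {x : Fin n → ZMod 2 // ¬ f x = 1} := by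
      apply Fintype.card_congr
      apply Equiv.subtypeEquivRight
      intro x
      rcases zmod2_cases (f x) with h1 | h1 <;> simp [h1]
    rw [hequiv, Fintype.card_subtype_compl, htotal]
  have hpow : 2 ^ n = 2 * 2 ^ (n - 1) := by
    have hp := pow_succ 2 (n - 1)
    have he : n - 1 + 1 = n := by omega
    rw [he] at hp
    omega
  have hmain : ∀ g, ¬ ((IsAnnihilator f g ∨ IsAnnihilator (fun x => f x + 1) g)
      ∧ degB g ≤ t) := by
    rintro g ⟨hor, hdeg⟩
    have : AI f ≤ degB g := Nat.sInf_le ⟨g, hor, rfl⟩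
    omega
  have h1 : ¬ A < 2 ^ (n - 1) := by
    intro hlt
    obtain ⟨g, hg0, hgann, hgdeg⟩ := exists_annih hn f hlt
    exact hmain g ⟨Or.inl ⟨hg0, hgann⟩, hgdeg⟩
  have h2 : ¬ 2 ^ n - A < 2 ^ (n - 1) := by
    intro hlt
    rw [← hcompl] at hlt
    obtain ⟨g, hg0, hgann, hgdeg⟩ := exists_annih hn (fun x => f x + 1) hlt
    exact hmain g ⟨Or.inr ⟨hg0, hgann⟩, hgdeg⟩
  omega
end
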